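/- Let β ∈ (0,1) and Γ₁, Γ₂ > 0 with Γ₁ < Γ₂, and set ε₀ = Γ₁²/Γ₂² ∈ (0,1). Define Q(ε) = 4Γ₁² β^{ε−1} + Γ₂² (1 − β^{ε−1}) · ε²/(ε − 1) for ε ∈ (0,1). Then Q is differentiable at ε₀ and Q'(ε₀) ≤ −2Γ₁² β^{ε₀−1} log(1/β) < 0. -/

import Mathlib

/-- Step in the proof of the high-noise-ratio lemma (clean data first): the
re-parametrized regret bound
`Q(ε) = 4Γ₁²β^{ε−1} + Γ₂²(1−β^{ε−1})ε²/(ε−1)` is differentiable at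
`ε₀ = Γ₁²/Γ₂² ∈ (0,1)` and its derivative there is at most
`−2Γ₁²β^{ε₀−1} log(1/β) < 0`. -/
theorem statement_19 (β Γ1 Γ2 : ℝ) (hβ : β ∈ Set.Ioo (0 : ℝ) 1)
    (hΓ1 : 0 < Γ1) (hΓ12 : Γ1 < Γ2) :
    DifferentiableAt ℝ
      (fun ε : ℝ => 4 * Γ1 ^ 2 * β ^ (ε - 1) + Γ2 ^ 2 * (1 - β ^ (ε - 1)) * ε ^ 2 / (ε - 1))
      (Γ1 ^ 2 / Γ2 ^ 2) ∧
    deriv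
      (fun ε : ℝ => 4 * Γ1 ^ 2 * β ^ (ε - 1) + Γ2 ^ 2 * (1 - β ^ (ε - 1)) * ε ^ 2 / (ε - 1))
      (Γ1 ^ 2 / Γ2 ^ 2) ≤
      -2 * Γ1 ^ 2 * β ^ (Γ1 ^ 2 / Γ2 ^ 2 - 1) * Real.log (1 / β) ∧
    -2 * Γ1 ^ 2 * β ^ (Γ1 ^ 2 / Γ2 ^ 2 - 1) * Real.log (1 / β) < 0 := by
  obtain ⟨hβ0, hβ1⟩ := hβ
  have hA : (0:ℝ) < Γ1 ^ 2 := pow_pos hΓ1 2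
  have hB : (0:ℝ) < Γ2 ^ 2 := pow_pos (lt_trans hΓ1 hΓ12) 2
  have hAB : Γ1 ^ 2 < Γ2 ^ 2 := by nlinarith
  set A : ℝ := Γ1 ^ 2 with hApow
  set B : ℝ := Γ2 ^ 2 with hBpow
  set e : ℝ := A / B with hedef
  have he0 : 0 < e := div_pos hA hB
  have he1 : e < 1 := (div_lt_one hB).mpr hAB
  have hne : e - 1 ≠ 0 := by intro h; nlinarith
  have hL : Real.log β < 0 := Real.log_neg hβ0 hβ1
  set L : ℝ := Real.log β with hLdef
  set p : ℝ := β ^ (e - 1) with hpdef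
  have hp0 : 0 < p := Real.rpow_pos_of_pos hβ0 _
  have hBe : B * e = A := by
    rw [hedef, mul_div_cancel₀ _ (ne_of_gt hB)]
  -- derivative of inner exponential
  have h0 : HasDerivAt (fun x : ℝ => x - 1) 1 e := (hasDerivAt_id e).sub_const 1
  have h1 : HasDerivAt (fun ε : ℝ => β ^ (ε - 1)) (p * L) e := by
    have := ((Real.hasStrictDerivAt_const_rpow hβ0 (e - 1)).hasDerivAt).comp e h0
    rw [show p * L = p * L * 1 by ring]; exact this
  have h2 : HasDerivAt (fun ε : ℝ => 4 * A * β ^ (ε - 1)) (4 * A * (p * L)) e :=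
    h1.const_mul (4 * A)
  have hc : HasDerivAt (fun ε : ℝ => B * (1 - β ^ (ε - 1))) (B * (0 - p * L)) e :=
    ((hasDerivAt_const e (1:ℝ)).sub h1).const_mul B
  have h3 : HasDerivAt (fun ε : ℝ => B * (1 - β ^ (ε - 1)) * ε ^ 2)
      (B * (0 - p * L) * e ^ 2 + B * (1 - p) * (↑2 * e ^ 1)) e :=
    hc.mul (hasDerivAt_pow 2 e)
  have h4 : HasDerivAt (fun ε : ℝ => B * (1 - β ^ (ε - 1)) * ε ^ 2 / (ε - 1))
      (((B * (0 - p * L) * e ^ 2 + B * (1 - p) * (↑2 * e ^ 1)) * (e - 1)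
        - B * (1 - p) * e ^ 2 * 1) / (e - 1) ^ 2) e :=
    h3.div h0 hne
  have hQ : HasDerivAt
      (fun ε : ℝ => 4 * A * β ^ (ε - 1) + B * (1 - β ^ (ε - 1)) * ε ^ 2 / (ε - 1))
      (4 * A * (p * L) +
        ((B * (0 - p * L) * e ^ 2 + B * (1 - p) * (↑2 * e ^ 1)) * (e - 1)
          - B * (1 - p) * e ^ 2 * 1) / (e - 1) ^ 2) e := h2.add h4
  -- key exponential inequality: p - 1 ≤ p * (L * (e - 1))
  have hpe : p = Real.exp (L * (e - 1)) := by
    rw [hpdef, Real.rpow_def_of_pos hβ0]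
  have hkey : p - 1 ≤ p * (L * (e - 1)) := by
    have h5 : 1 + -(L * (e - 1)) ≤ Real.exp (-(L * (e - 1))) := by
      have := Real.add_one_le_exp (-(L * (e - 1))); linarith
    have h6 : p * Real.exp (-(L * (e - 1))) = 1 := by
      rw [hpe, ← Real.exp_add]; simp
    nlinarith [mul_le_mul_of_nonneg_left h5 hp0.le]
  have hlog : Real.log (1 / β) = -L := by
    rw [one_div, Real.log_inv, hLdef]
  refine ⟨hQ.differentiableAt, ?_, ?_⟩
  · rw [hQ.deriv, hlog]
    have hgoal : ((B * (0 - p * L) * e ^ 2 + B * (1 - p) * (↑2 * e ^ 1)) * (e - 1)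
        - B * (1 - p) * e ^ 2 * 1) / (e - 1) ^ 2 ≤ -2 * A * p * (-L) - 4 * A * (p * L) := by
      rw [div_le_iff₀ (by positivity : (0:ℝ) < (e - 1) ^ 2)]
      have hscale : B * e * (2 - e) * (p - 1) ≤ B * e * (2 - e) * (p * (L * (e - 1))) :=
        mul_le_mul_of_nonneg_left hkey (by nlinarith)
      rw [← hBe]
      nlinarith [hscale]
    linarith
  · rw [hlog]
    nlinarith [mul_pos hA hp0]
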